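/- Define T = t, X₁ = -(B/6)t² + x₁, X₂ = -(B/3)t + x₂, X₃ = x₃/(1 - (B/3)x₃), X₄ = (1+x₄)/(1 - (B/3)x₃)³ - 1, X₅ = x₅/(1 - (B/3)x₃)⁴ + B(1+x₄)²/(1 - (B/3)x₃)⁵ - B, as germs at 0 ∈ ℝ⁶ (coordinates t, x₁, x₂, x₃, x₄, x₅). Then the differential d(T,X₁,...,X₅) applied to the vector field [x₃, x₂x₃, 1, 1+x₄, x₅, 0]ᵀ equals (1 - (B/3)x₃)·[X₃, X₂X₃, 1, 1+X₄, B+X₅, 0]ᵀ + (∗)∂/∂x₅ for some function (∗); in particular the first five components of the identity hold exactly. -/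

import Mathlib

/-- ℝ⁶ with coordinates t, x₁, x₂, x₃, x₄, x₅ (indices 0,…,5). -/
abbrev E6 := Fin 6 → ℝ

/-- The Cheaito–Mormul coordinate change with constant B:
T = t, X₁ = -(B/6)t² + x₁, X₂ = -(B/3)t + x₂, X₃ = x₃/(1-(B/3)x₃),
X₄ = (1+x₄)/(1-(B/3)x₃)³ - 1,
X₅ = x₅/(1-(B/3)x₃)⁴ + B(1+x₄)²/(1-(B/3)x₃)⁵ - B. -/
noncomputable def Phi (B : ℝ) : E6 → E6 := fun v =>
  ![v 0,
    -(B / 6) * v 0 ^ 2 + v 1,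
    -(B / 3) * v 0 + v 2,
    v 3 * ((1 - B / 3 * v 3)⁻¹),
    (1 + v 4) * ((1 - B / 3 * v 3)⁻¹) ^ 3 - 1,
    v 5 * ((1 - B / 3 * v 3)⁻¹) ^ 4 + B * (1 + v 4) ^ 2 * ((1 - B / 3 * v 3)⁻¹) ^ 5 - B]

/-- The Goursat vector field `x₃∂_t + x₂x₃∂_{x₁} + ∂_{x₂} + (1+x₄)∂_{x₃} + x₅∂_{x₄}`. -/
noncomputable def W : E6 → E6 := fun v => ![v 3, v 2 * v 3, 1, 1 + v 4, v 5, 0]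

/-- Its counterpart with constant B: `X₃∂_t + X₂X₃∂_{x₁} + ∂_{x₂} + (1+X₄)∂_{x₃} + (B+X₅)∂_{x₄}`. -/
noncomputable def W' (B : ℝ) : E6 → E6 := fun u => ![u 3, u 2 * u 3, 1, 1 + u 4, B + u 5, 0]

set_option maxHeartbeats 1000000 in
/-- The differential of Phi applied to W equals `(1 - (B/3)x₃)` times W'
evaluated at Phi, up to a term in ∂/∂x₅: the first five components of the
identity hold exactly (near 0). -/
theorem goursat_conjugacy_CM (B : ℝ) :
    ∀ᶠ v : E6 in nhds 0, ∀ i : Fin 6, (i : ℕ) < 5 →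
      fderiv ℝ (Phi B) v (W v) i = (1 - B / 3 * v 3) * W' B (Phi B v) i := by
  have hcont : ContinuousAt (fun v : E6 => 1 - B / 3 * v 3) 0 :=
    (continuous_const.sub (continuous_const.mul (continuous_apply (3 : Fin 6)))).continuousAt
  have h0 : (fun v : E6 => 1 - B / 3 * v 3) 0 ≠ 0 := by norm_num
  filter_upwards [hcont.eventually_ne h0] with v hv
  have hv3 : (3 : ℝ) - B * v 3 ≠ 0 := by
    intro h
    exact hv (by rw [show (1 : ℝ) - B / 3 * v 3 = (3 - B * v 3) / 3 by ring, h]; norm_num)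
  have hv' : 3 - v 3 * B ≠ 0 := fun h => hv (by linear_combination (1/3 : ℝ) * h)
  have hp := fun j : Fin 6 => hasFDerivAt_apply (𝕜 := ℝ) j v
  have hbase := ((hp 3).const_mul (B/3)).const_sub 1
  have hinv0 := (hasFDerivAt_inv' (𝕜 := ℝ) hv).comp v hbase
  have hdinv : DifferentiableAt ℝ (fun x : E6 => (1 - B / 3 * x 3)⁻¹) v :=
    hinv0.differentiableAt
  have hinv := hdinv.hasFDerivAt
  have hval : fderiv ℝ (fun x : E6 => (1 - B / 3 * x 3)⁻¹) v (W v)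
      = B / 3 * (1 + v 4) * (1 - B / 3 * v 3)⁻¹ * (1 - B / 3 * v 3)⁻¹ := by
    have h := hinv0.fderiv
    rw [show (fun x : E6 => (1 - B / 3 * x 3)⁻¹)
        = Inv.inv ∘ (fun x : E6 => 1 - B / 3 * x 3) from rfl, h]
    simp only [ContinuousLinearMap.comp_apply, ContinuousLinearMap.neg_apply,
      ContinuousLinearMap.smul_apply, ContinuousLinearMap.proj_apply,
      ContinuousLinearMap.mulLeftRight_apply, smul_eq_mul, W]
    simp only [Matrix.cons_val', Matrix.cons_val_zero, Matrix.cons_val_one, Matrix.head_cons,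
      Matrix.cons_val_fin_one, Matrix.cons_val_two, Matrix.tail_cons, Matrix.cons_val_three]
    ring
  have h0' := hp 0
  have h1' := (((hp 0).mul (hp 0)).const_mul (-(B/6))).add (hp 1)
  have h2' := ((hp 0).const_mul (-(B/3))).add (hp 2)
  have h3' := (hp 3).mul hinv
  have hinv3 := (hinv.mul hinv).mul hinv
  have h4' := (((hp 4).const_add 1).mul hinv3).sub_const 1
  have h5' := (((hp 5).mul (hinv3.mul hinv)).add
    ((((hp 4).const_add 1).mul ((hp 4).const_add 1)).const_mul B |>.mul (hinv3.mul (hinv.mul hinv)))).sub_const B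
  have hW0 : W v 0 = v 3 := rfl
  have hW1 : W v 1 = v 2 * v 3 := rfl
  have hW2 : W v 2 = 1 := rfl
  have hW3 : W v 3 = 1 + v 4 := rfl
  have hW4 : W v 4 = v 5 := rfl
  have hR0 : W' B (Phi B v) 0 = Phi B v 3 := rfl
  have hR1 : W' B (Phi B v) 1 = Phi B v 2 * Phi B v 3 := rfl
  have hR2 : W' B (Phi B v) 2 = 1 := rfl
  have hR3 : W' B (Phi B v) 3 = 1 + Phi B v 4 := rfl
  have hR4 : W' B (Phi B v) 4 = B + Phi B v 5 := rfl
  have hP2 : Phi B v 2 = -(B / 3) * v 0 + v 2 := rfl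
  have hP3 : Phi B v 3 = v 3 * (1 - B / 3 * v 3)⁻¹ := rfl
  have hP4 : Phi B v 4 = (1 + v 4) * ((1 - B / 3 * v 3)⁻¹) ^ 3 - 1 := rfl
  have hP5 : Phi B v 5 = v 5 * ((1 - B / 3 * v 3)⁻¹) ^ 4
      + B * (1 + v 4) ^ 2 * ((1 - B / 3 * v 3)⁻¹) ^ 5 - B := rfl
  have e0 : (fun v : E6 => Phi B v 0) = fun v => v 0 := rfl
  have e1 : (fun v : E6 => Phi B v 1) = fun v => -(B/6) * (v 0 * v 0) + v 1 := by
    funext x; show -(B/6) * x 0 ^ 2 + x 1 = _; ring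
  have e2 : (fun v : E6 => Phi B v 2) = fun v => -(B/3) * v 0 + v 2 := rfl
  have e3 : (fun v : E6 => Phi B v 3) = fun v => v 3 * ((1 - B/3 * v 3)⁻¹) := rfl
  have e4 : (fun v : E6 => Phi B v 4) =
      fun v => (1 + v 4) * ((1 - B/3 * v 3)⁻¹ * (1 - B/3 * v 3)⁻¹ * (1 - B/3 * v 3)⁻¹) - 1 := by
    funext x; show (1 + x 4) * ((1 - B/3 * x 3)⁻¹) ^ 3 - 1 = _; ring
  have e5 : (fun v : E6 => Phi B v 5) =
      fun v => v 5 * ((1 - B/3 * v 3)⁻¹ * (1 - B/3 * v 3)⁻¹ * (1 - B/3 * v 3)⁻¹ * (1 - B/3 * v 3)⁻¹)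
        + B * ((1 + v 4) * (1 + v 4)) *
          ((1 - B/3 * v 3)⁻¹ * (1 - B/3 * v 3)⁻¹ * (1 - B/3 * v 3)⁻¹ * ((1 - B/3 * v 3)⁻¹ * (1 - B/3 * v 3)⁻¹)) - B := by
    funext x
    show x 5 * ((1 - B/3 * x 3)⁻¹) ^ 4 + B * (1 + x 4) ^ 2 * ((1 - B/3 * x 3)⁻¹) ^ 5 - B = _
    ring
  have hdiff : ∀ i : Fin 6, DifferentiableAt ℝ (fun v => Phi B v i) v := by
    intro i
    fin_cases i
    · exact e0 ▸ h0'.differentiableAt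
    · exact e1 ▸ h1'.differentiableAt
    · exact e2 ▸ h2'.differentiableAt
    · exact e3 ▸ h3'.differentiableAt
    · exact e4 ▸ h4'.differentiableAt
    · exact e5 ▸ h5'.differentiableAt
  intro i hi
  rw [fderiv_pi hdiff]
  simp only [ContinuousLinearMap.pi_apply]
  fin_cases i
  · show fderiv ℝ (fun v => Phi B v 0) v (W v) = (1 - B / 3 * v 3) * W' B (Phi B v) 0
    rw [e0, h0'.fderiv]
    simp only [ContinuousLinearMap.proj_apply, hW0, hR0, hP3]
    rw [mul_left_comm, mul_inv_cancel₀ hv, mul_one]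
  · show fderiv ℝ (fun v => Phi B v 1) v (W v) = (1 - B / 3 * v 3) * W' B (Phi B v) 1
    rw [e1, HasFDerivAt.fderiv (f := fun v : E6 => -(B/6) * (v 0 * v 0) + v 1) h1']
    simp only [ContinuousLinearMap.add_apply, ContinuousLinearMap.smul_apply,
      ContinuousLinearMap.proj_apply, smul_eq_mul, hW0, hW1, hR1, hP2, hP3]
    field_simp
    ring
  · show fderiv ℝ (fun v => Phi B v 2) v (W v) = (1 - B / 3 * v 3) * W' B (Phi B v) 2
    rw [e2, HasFDerivAt.fderiv (f := fun v : E6 => -(B/3) * v 0 + v 2) h2']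
    simp only [ContinuousLinearMap.add_apply, ContinuousLinearMap.smul_apply,
      ContinuousLinearMap.proj_apply, smul_eq_mul, hW0, hW2, hR2]
    ring
  · show fderiv ℝ (fun v => Phi B v 3) v (W v) = (1 - B / 3 * v 3) * W' B (Phi B v) 3
    rw [e3, HasFDerivAt.fderiv (f := fun v : E6 => v 3 * ((1 - B/3 * v 3)⁻¹)) h3']
    simp only [ContinuousLinearMap.add_apply, ContinuousLinearMap.smul_apply,
      ContinuousLinearMap.proj_apply, smul_eq_mul]
    rw [hval, hW3, hR3, hP4]
    field_simp
    ring
  · show fderiv ℝ (fun v => Phi B v 4) v (W v) = (1 - B / 3 * v 3) * W' B (Phi B v) 4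
    rw [e4, HasFDerivAt.fderiv (f := fun v : E6 => (1 + v 4) * ((1 - B/3 * v 3)⁻¹ * (1 - B/3 * v 3)⁻¹ * (1 - B/3 * v 3)⁻¹) - 1) h4']
    simp only [ContinuousLinearMap.add_apply, ContinuousLinearMap.smul_apply,
      ContinuousLinearMap.proj_apply, smul_eq_mul, Pi.mul_apply, Pi.pow_apply]
    rw [hval, hW4, hR4, hP5]
    field_simp
    ring
  · simp at hi
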